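/- arXiv:1805.00075 — 2 statements merged into one kernel-verified Lean document; each statement's English description precedes it below -/
import Mathlib

section
/- For all integers k ≥ 1 and h with 0 ≤ h < k, and every real x ≥ 2^{k+1}·k, one has g_k(x) < (1/2)·g_h(x + 2^k). -/
open Finset intervalIntegral MeasureTheory

/-- Thue–Morse signs: `tmSign n = ε_n = (-1)^{t_n}`, where `t_n` is the parity of
the number of ones in the binary representation of `n`. -/
noncomputable def tmSign (n : ℕ) : ℝ := (-1 : ℝ) ^ (Nat.digits 2 n).sum

/-- `gFun k x = g_k(x) = ∑_{0 ≤ ℓ < 2^k} ε_ℓ / (x + ℓ)`. -/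
noncomputable def gFun (k : ℕ) (x : ℝ) : ℝ :=
  ∑ ℓ ∈ Finset.range (2 ^ k), tmSign ℓ / (x + ℓ)

/-! ### Digit sums and the Thue–Morse recursion -/

lemma digits_sum_aux (ℓ : ℕ) : (Nat.digits 2 ℓ).sum = ℓ % 2 + (Nat.digits 2 (ℓ / 2)).sum := by
  rcases Nat.eq_zero_or_pos ℓ with h | h
  · simp [h]
  · rw [Nat.digits_def' (by norm_num) h]; simp

lemma digits_sum_pow_add : ∀ m ℓ : ℕ, ℓ < 2 ^ m →
    (Nat.digits 2 (2 ^ m + ℓ)).sum = (Nat.digits 2 ℓ).sum + 1 := by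
  intro m
  induction m with
  | zero =>
    intro ℓ hℓ
    interval_cases ℓ
    simp
  | succ m ih =>
    intro ℓ hℓ
    have h1 : 0 < 2 ^ (m + 1) + ℓ := by positivity
    rw [Nat.digits_def' (by norm_num) h1]
    have h2 : (2 ^ (m + 1) + ℓ) % 2 = ℓ % 2 := by omega
    have h3 : (2 ^ (m + 1) + ℓ) / 2 = 2 ^ m + ℓ / 2 := by omega
    have h4 : ℓ / 2 < 2 ^ m := by omega
    rw [List.sum_cons, h2, h3, ih _ h4, digits_sum_aux ℓ]
    ring

lemma tmSign_pow_add {m ℓ : ℕ} (h : ℓ < 2 ^ m) : tmSign (2 ^ m + ℓ) = - tmSign ℓ := by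
  unfold tmSign
  rw [digits_sum_pow_add m ℓ h, pow_succ]
  ring

/-! ### The polynomial `S m t = ∑ ε_ℓ t^ℓ` and its product form -/

noncomputable def S (m : ℕ) (t : ℝ) : ℝ := ∑ ℓ ∈ range (2 ^ m), tmSign ℓ * t ^ ℓ

noncomputable def S' (m : ℕ) (t : ℝ) : ℝ :=
  ∑ ℓ ∈ range (2 ^ m), tmSign ℓ * ((ℓ : ℝ) * t ^ (ℓ - 1))

lemma S_eq_prod (m : ℕ) (t : ℝ) : S m t = ∏ j ∈ range m, (1 - t ^ (2 ^ j)) := by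
  induction m with
  | zero => simp [S, tmSign]
  | succ m ih =>
    rw [prod_range_succ, ← ih]
    unfold S
    rw [pow_succ, mul_two, Finset.sum_range_add]
    have : ∀ ℓ ∈ range (2 ^ m), tmSign (2 ^ m + ℓ) * t ^ (2 ^ m + ℓ)
        = -(t ^ (2 ^ m) * (tmSign ℓ * t ^ ℓ)) := by
      intro ℓ hℓ
      rw [tmSign_pow_add (mem_range.mp hℓ), pow_add]
      ring
    rw [Finset.sum_congr rfl this, Finset.sum_neg_distrib, ← Finset.mul_sum]
    ring

lemma factor_mem {t : ℝ} (h0 : 0 ≤ t) (h1 : t ≤ 1) (j : ℕ) :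
    0 ≤ 1 - t ^ (2 ^ j) ∧ 1 - t ^ (2 ^ j) ≤ 1 := by
  constructor
  · have := pow_le_one₀ h0 h1 (n := 2 ^ j)
    linarith
  · have := pow_nonneg h0 (2 ^ j)
    linarith

lemma S_nonneg (m : ℕ) {t : ℝ} (h0 : 0 ≤ t) (h1 : t ≤ 1) : 0 ≤ S m t := by
  rw [S_eq_prod]
  exact Finset.prod_nonneg fun j _ => (factor_mem h0 h1 j).1

lemma S_pos (m : ℕ) {t : ℝ} (h0 : 0 ≤ t) (h1 : t < 1) : 0 < S m t := by
  rw [S_eq_prod]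
  refine Finset.prod_pos fun j _ => ?_
  have := pow_lt_one₀ h0 h1 (n := 2 ^ j) (by positivity)
  linarith

lemma sum_tmSign {m : ℕ} (hm : 1 ≤ m) : ∑ ℓ ∈ range (2 ^ m), tmSign ℓ = 0 := by
  have h := S_eq_prod m 1
  unfold S at h
  simp only [one_pow, mul_one] at h
  rw [h]
  apply Finset.prod_eq_zero (i := 0) (Finset.mem_range.mpr hm)
  norm_num

/-! ### Elementary power inequalities -/

lemma pow_ineq_lower {t : ℝ} (h0 : 0 ≤ t) (h1 : t ≤ 1) (q : ℕ) :
    (q : ℝ) * t ^ (q - 1) * (1 - t) ≤ 1 - t ^ q := by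
  have hg : (1 - t) * ∑ i ∈ range q, t ^ i = 1 - t ^ q := by
    have := mul_geom_sum t q
    linarith [this]
  rw [← hg]
  have hsum : (q : ℝ) * t ^ (q - 1) ≤ ∑ i ∈ range q, t ^ i := by
    calc (q : ℝ) * t ^ (q - 1) = ∑ _i ∈ range q, t ^ (q - 1) := by
          rw [Finset.sum_const, card_range, nsmul_eq_mul]
      _ ≤ ∑ i ∈ range q, t ^ i := by
          refine Finset.sum_le_sum fun i hi => ?_
          exact pow_le_pow_of_le_one h0 h1
            (by have := Finset.mem_range.mp hi; omega : i ≤ q - 1)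
  nlinarith [hsum, sub_nonneg.mpr h1]

lemma pow_ineq_upper {t : ℝ} (h0 : 0 ≤ t) (h1 : t ≤ 1) (q : ℕ) :
    1 - t ^ q ≤ (q : ℝ) * (1 - t) := by
  have hg : (1 - t) * ∑ i ∈ range q, t ^ i = 1 - t ^ q := by
    have := mul_geom_sum t q
    linarith [this]
  rw [← hg]
  have hsum : ∑ i ∈ range q, t ^ i ≤ (q : ℝ) := by
    calc ∑ i ∈ range q, t ^ i ≤ ∑ _i ∈ range q, (1:ℝ) :=
          Finset.sum_le_sum fun i _ => pow_le_one₀ h0 h1 (n := i)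
      _ = q := by simp
  nlinarith [hsum, sub_nonneg.mpr h1]

/-! ### Derivative bounds -/

lemma hasDerivAt_S (m : ℕ) (t : ℝ) : HasDerivAt (S m) (S' m t) t := by
  unfold S S'
  exact HasDerivAt.fun_sum fun ℓ _ => (hasDerivAt_pow ℓ t).const_mul (tmSign ℓ)

lemma prod_deriv_bound (m : ℕ) {t : ℝ} (h0 : 0 ≤ t) (h1 : t ≤ 1) :
    ∃ d : ℝ, HasDerivAt (S m) d t ∧ d ≤ 0 ∧ (1 - t) * (-d) ≤ (m : ℝ) * S m t := by
  induction m with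
  | zero =>
    refine ⟨0, ?_, le_refl _, by simp⟩
    have : S 0 = fun _ : ℝ => 1 := by
      funext s; rw [S_eq_prod]; simp
    rw [this]
    exact hasDerivAt_const t 1
  | succ m ih =>
    obtain ⟨d, hd, hd0, hdb⟩ := ih
    set q : ℕ := 2 ^ m with hq
    have hfun : S (m + 1) = fun s : ℝ => S m s * (1 - s ^ q) := by
      funext s; rw [S_eq_prod, S_eq_prod, prod_range_succ]
    have hder : HasDerivAt (S (m+1)) (d * (1 - t ^ q) + S m t * (-(q * t ^ (q-1)))) t := by
      rw [hfun]
      exact hd.mul (((hasDerivAt_pow q t).const_sub 1))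
    refine ⟨_, hder, ?_, ?_⟩
    · have h2 := (factor_mem h0 h1 m).1
      have h3 := S_nonneg m h0 h1
      have h4 : (0:ℝ) ≤ (q:ℝ) * t ^ (q-1) := by positivity
      nlinarith
    · have h2 := (factor_mem h0 h1 m).1
      have h3 := S_nonneg m h0 h1
      have h5 := pow_ineq_lower h0 h1 q
      have hS1 : S (m+1) t = S m t * (1 - t ^ q) := by rw [hfun]
      rw [hS1]
      push_cast
      nlinarith [mul_nonneg (sub_nonneg.mpr h1) (neg_nonneg.mpr hd0)]

lemma S'_bound (m : ℕ) {t : ℝ} (h0 : 0 ≤ t) (h1 : t ≤ 1) :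
    S' m t ≤ 0 ∧ (1 - t) * (-(S' m t)) ≤ (m : ℝ) * S m t := by
  obtain ⟨d, hd, hd0, hdb⟩ := prod_deriv_bound m h0 h1
  have : d = S' m t := hd.unique (hasDerivAt_S m t)
  rw [← this]
  exact ⟨hd0, hdb⟩

/-! ### Integral representation -/

lemma cont_rpow {c : ℝ} (hc : 0 < c) : Continuous fun t : ℝ => t ^ c := by
  rw [continuous_iff_continuousAt]
  intro t
  exact Real.continuousAt_rpow_const t c (Or.inr hc.le)

lemma moment_integral {y : ℝ} (hy : 1 < y) (ℓ : ℕ) :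
    ∫ t in (0:ℝ)..1, t ^ (y - 1) * t ^ ℓ = 1 / (y + ℓ) := by
  have key : ∫ t in (0:ℝ)..1, t ^ (y - 1) * t ^ ℓ = ∫ t in (0:ℝ)..1, t ^ (y + ℓ - 1) := by
    apply intervalIntegral.integral_congr
    intro t ht
    rw [Set.uIcc_of_le (by norm_num : (0:ℝ) ≤ 1)] at ht
    obtain ⟨ht0, ht1⟩ := ht
    show t ^ (y - 1) * t ^ ℓ = t ^ (y + ℓ - 1)
    rcases eq_or_lt_of_le ht0 with h | h
    · rw [← h]
      rw [Real.zero_rpow (by linarith : y - 1 ≠ 0),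
        Real.zero_rpow (by linarith [Nat.cast_nonneg (α := ℝ) ℓ] : y + ℓ - 1 ≠ 0)]
      simp
    · rw [← Real.rpow_natCast t ℓ, ← Real.rpow_add h]
      ring_nf
  rw [key, integral_rpow (Or.inl (by linarith [Nat.cast_nonneg (α := ℝ) ℓ]))]
  have h1 : y + ℓ - 1 + 1 = y + ℓ := by ring
  rw [h1, Real.one_rpow, Real.zero_rpow (by linarith [Nat.cast_nonneg (α := ℝ) ℓ])]
  ring

lemma cont_S (m : ℕ) : Continuous (S m) := by
  unfold S
  exact continuous_finset_sum _ fun ℓ _ => continuous_const.mul (continuous_pow ℓ)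

lemma cont_S' (m : ℕ) : Continuous (S' m) := by
  unfold S'
  exact continuous_finset_sum _ fun ℓ _ =>
    continuous_const.mul (continuous_const.mul (continuous_pow (ℓ - 1)))

lemma integrable_weight {y : ℝ} (hy : 1 < y) {F : ℝ → ℝ} (hF : Continuous F) :
    IntervalIntegrable (fun t => t ^ (y - 1) * F t) volume 0 1 :=
  ((cont_rpow (by linarith : (0:ℝ) < y - 1)).mul hF).intervalIntegrable 0 1

lemma gFun_rep {y : ℝ} (hy : 1 < y) (m : ℕ) :
    gFun m y = ∫ t in (0:ℝ)..1, t ^ (y - 1) * S m t := by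
  have : ∀ t : ℝ, t ^ (y - 1) * S m t
      = ∑ ℓ ∈ range (2 ^ m), tmSign ℓ * (t ^ (y - 1) * t ^ ℓ) := by
    intro t
    unfold S
    rw [Finset.mul_sum]
    exact Finset.sum_congr rfl fun ℓ _ => by ring
  simp only [this]
  rw [intervalIntegral.integral_finset_sum]
  · unfold gFun
    refine Finset.sum_congr rfl fun ℓ _ => ?_
    rw [intervalIntegral.integral_const_mul, moment_integral hy ℓ]
    ring
  · intro ℓ _
    exact (continuous_const.mul ((cont_rpow (by linarith : (0:ℝ) < y - 1)).mul
      (continuous_pow ℓ))).intervalIntegrable 0 1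

lemma gFun_pos {y : ℝ} (hy : 1 < y) (m : ℕ) : 0 < gFun m y := by
  rw [gFun_rep hy m]
  apply intervalIntegral.intervalIntegral_pos_of_pos_on
    (integrable_weight hy (cont_S m)) _ one_pos
  intro t ht
  exact mul_pos (Real.rpow_pos_of_pos ht.1 _) (S_pos m ht.1.le ht.2)

/-- the `ℓ`-weighted representation: `y·g_m(y) = -∑ ε_ℓ ℓ/(y+ℓ)` for `m ≥ 1`. -/
lemma weighted_id {y : ℝ} (hy : 1 < y) {m : ℕ} (hm : 1 ≤ m) :
    y * gFun m y = - ∑ ℓ ∈ range (2 ^ m), tmSign ℓ * ((ℓ : ℝ) / (y + ℓ)) := by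
  unfold gFun
  rw [Finset.mul_sum, ← Finset.sum_neg_distrib]
  have h0 : ∑ ℓ ∈ range (2 ^ m), tmSign ℓ = 0 := sum_tmSign hm
  have key : ∀ ℓ ∈ range (2 ^ m),
      y * (tmSign ℓ / (y + ℓ)) = tmSign ℓ - tmSign ℓ * ((ℓ : ℝ) / (y + ℓ)) := by
    intro ℓ _
    have hne : y + (ℓ:ℝ) ≠ 0 := by positivity
    field_simp
    ring
  rw [Finset.sum_congr rfl key, Finset.sum_sub_distrib, h0]
  simp

/-- Key smoothness estimate: `x·g_m(x) - (x+a)·g_m(x+a) ≤ a·m·g_m(x)`. -/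
lemma ratio_lemma {x : ℝ} (hx : 1 < x) (m : ℕ) (a : ℕ) (ha : 1 ≤ a) :
    (x - (a : ℝ) * m) * gFun m x ≤ (x + a) * gFun m (x + a) := by
  rcases Nat.eq_zero_or_pos m with hm | hm
  · subst hm
    have h1 : gFun 0 x = 1 / x := by
      unfold gFun; simp [tmSign]
    have h2 : gFun 0 (x + a) = 1 / (x + a) := by
      unfold gFun; simp [tmSign]
    have hxa : (0:ℝ) < x + a := by positivity
    rw [h1, h2]
    push_cast
    rw [mul_zero, sub_zero, mul_one_div, mul_one_div,
      div_self (by linarith : x ≠ 0), div_self (by linarith : x + (a:ℝ) ≠ 0)]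
  · -- m ≥ 1
    have hxa : 1 < x + (a:ℝ) := by
      have : (0:ℝ) ≤ a := Nat.cast_nonneg a
      linarith
    -- the difference as an integral
    have key : x * gFun m x - (x + a) * gFun m (x + a)
        = ∫ t in (0:ℝ)..1, t ^ (x - 1) * ((1 - t ^ a) * (t * (-(S' m t)))) := by
      rw [weighted_id hx hm, weighted_id hxa hm]
      have expand : ∀ t : ℝ, t ^ (x - 1) * ((1 - t ^ a) * (t * (-(S' m t))))
          = ∑ ℓ ∈ range (2 ^ m),
              (-(tmSign ℓ) * ℓ) * (t ^ (x - 1) * t ^ ℓ - t ^ (x - 1) * t ^ (a + ℓ)) := by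
        intro t
        unfold S'
        rw [← Finset.sum_neg_distrib, Finset.mul_sum, Finset.mul_sum, Finset.mul_sum]
        refine Finset.sum_congr rfl fun ℓ _ => ?_
        rcases Nat.eq_zero_or_pos ℓ with h | h
        · subst h; simp
        · have : ℓ - 1 + 1 = ℓ := Nat.succ_pred_eq_of_pos h
          rw [pow_add, ← this, pow_succ]
          push_cast [this]
          ring
      simp only [expand]
      rw [intervalIntegral.integral_finset_sum]
      · rw [sub_neg_eq_add, ← Finset.sum_neg_distrib, ← Finset.sum_add_distrib]
        refine Finset.sum_congr rfl fun ℓ _ => ?_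
        have int1 : IntervalIntegrable (fun t : ℝ => t ^ (x-1) * t ^ ℓ) volume 0 1 :=
          ((cont_rpow (by linarith : (0:ℝ) < x - 1)).mul (continuous_pow ℓ)).intervalIntegrable 0 1
        have int2 : IntervalIntegrable (fun t : ℝ => t ^ (x-1) * t ^ (a + ℓ)) volume 0 1 :=
          ((cont_rpow (by linarith : (0:ℝ) < x - 1)).mul
            (continuous_pow (a + ℓ))).intervalIntegrable 0 1
        rw [intervalIntegral.integral_const_mul, intervalIntegral.integral_sub int1 int2,
          moment_integral hx ℓ, moment_integral hx (a + ℓ)]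
        have hcast : x + (((a : ℕ) + ℓ : ℕ) : ℝ) = (x + a) + ℓ := by push_cast; ring
        rw [hcast]
        ring
      · intro ℓ _
        exact (continuous_const.mul (((cont_rpow (by linarith : (0:ℝ) < x - 1)).mul
          (continuous_pow ℓ)).sub ((cont_rpow (by linarith : (0:ℝ) < x - 1)).mul
          (continuous_pow (a + ℓ))))).intervalIntegrable 0 1
    -- bound the integral
    have bound : ∫ t in (0:ℝ)..1, t ^ (x - 1) * ((1 - t ^ a) * (t * (-(S' m t))))
        ≤ ∫ t in (0:ℝ)..1, t ^ (x - 1) * (((a : ℝ) * m) * S m t) := by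
      apply intervalIntegral.integral_mono_on (by norm_num)
      · exact integrable_weight hx (((continuous_const.sub (continuous_pow a)).mul
          (continuous_id.mul (cont_S' m).neg)))
      · exact integrable_weight hx (continuous_const.mul (cont_S m))
      · intro t ht
        obtain ⟨ht0, ht1⟩ := ht
        have hrp : (0:ℝ) ≤ t ^ (x - 1) := Real.rpow_nonneg ht0 _
        apply mul_le_mul_of_nonneg_left _ hrp
        obtain ⟨hd0, hdb⟩ := S'_bound m ht0 ht1
        have hup := pow_ineq_upper ht0 ht1 a
        have hSn := S_nonneg m ht0 ht1
        have hta : t ^ a ≤ 1 := pow_le_one₀ ht0 ht1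
        have h1 : (1 - t ^ a) * (t * (-(S' m t))) ≤ (a : ℝ) * (1 - t) * (t * (-(S' m t))) := by
          apply mul_le_mul_of_nonneg_right hup
          have : 0 ≤ -(S' m t) := by linarith
          positivity
        have h2 : (a : ℝ) * (1 - t) * (t * (-(S' m t))) ≤ (a : ℝ) * (t * ((m : ℝ) * S m t)) := by
          have hna : (0:ℝ) ≤ a := Nat.cast_nonneg a
          nlinarith [mul_le_mul_of_nonneg_left hdb ht0]
        have h3 : (a : ℝ) * (t * ((m : ℝ) * S m t)) ≤ (a : ℝ) * m * S m t := by
          have hna : (0:ℝ) ≤ a := Nat.cast_nonneg a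
          have hmn : (0:ℝ) ≤ m := Nat.cast_nonneg m
          have hstep : t * ((m:ℝ) * S m t) ≤ (m:ℝ) * S m t := by
            nlinarith [mul_nonneg hmn hSn]
          have h3' := mul_le_mul_of_nonneg_left hstep hna
          have he : (a:ℝ) * ((m:ℝ) * S m t) = (a:ℝ) * m * S m t := by ring
          linarith
        linarith
    have grep : ∫ t in (0:ℝ)..1, t ^ (x - 1) * (((a : ℝ) * m) * S m t)
        = (a : ℝ) * m * gFun m x := by
      rw [gFun_rep hx m, ← intervalIntegral.integral_const_mul]
      apply intervalIntegral.integral_congr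
      intro t _
      show t ^ (x - 1) * ((a : ℝ) * m * S m t) = (a : ℝ) * m * (t ^ (x - 1) * S m t)
      ring
    rw [grep] at bound
    rw [← key] at bound
    nlinarith [bound]

/-! ### Main comparison -/

lemma shift_rep {x : ℝ} (hx : 1 < x) (b : ℕ) (hb : 1 ≤ b) (m : ℕ) :
    gFun m (x + b) = ∫ t in (0:ℝ)..1, t ^ (x - 1) * (t ^ b * S m t) := by
  have hxb : 1 < x + (b:ℝ) := by
    have : (0:ℝ) ≤ b := Nat.cast_nonneg b
    linarith
  rw [gFun_rep hxb m]
  apply intervalIntegral.integral_congr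
  intro t ht
  rw [Set.uIcc_of_le (by norm_num : (0:ℝ) ≤ 1)] at ht
  obtain ⟨ht0, ht1⟩ := ht
  show t ^ (x + b - 1) * S m t = t ^ (x - 1) * (t ^ b * S m t)
  rcases eq_or_lt_of_le ht0 with h | h
  · rw [← h]
    rw [Real.zero_rpow (by linarith [Nat.cast_nonneg (α := ℝ) b] : x + b - 1 ≠ 0),
      Real.zero_rpow (by linarith : x - 1 ≠ 0)]
    simp
  · rw [← Real.rpow_natCast t b, ← mul_assoc, ← Real.rpow_add h]
    ring_nf

lemma S_le_chop {k h : ℕ} (hh : h < k) {t : ℝ} (h0 : 0 ≤ t) (h1 : t ≤ 1) :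
    S k t ≤ S h t * (1 - t ^ (2 ^ (k - 1))) := by
  have hc : k - 1 + 1 = k := by omega
  have hsplit : S k t = S h t * ∏ j ∈ Ico h k, (1 - t ^ (2 ^ j)) := by
    rw [S_eq_prod, S_eq_prod, Finset.prod_range_mul_prod_Ico _ (le_of_lt hh)]
  rw [hsplit]
  have htop : ∏ j ∈ Ico h k, (1 - t ^ (2 ^ j))
      = (∏ j ∈ Ico h (k-1), (1 - t ^ (2 ^ j))) * (1 - t ^ (2 ^ (k-1))) := by
    conv_lhs => rw [← hc]
    exact Finset.prod_Ico_succ_top (by omega) _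
  rw [htop]
  have hrest : ∏ j ∈ Ico h (k-1), (1 - t ^ (2 ^ j)) ≤ 1 :=
    Finset.prod_le_one (fun j _ => (factor_mem h0 h1 j).1) (fun j _ => (factor_mem h0 h1 j).2)
  have hrest0 : 0 ≤ ∏ j ∈ Ico h (k-1), (1 - t ^ (2 ^ j)) :=
    Finset.prod_nonneg fun j _ => (factor_mem h0 h1 j).1
  have hfac := (factor_mem h0 h1 (k-1)).1
  have hS := S_nonneg h h0 h1
  have h1 : (∏ j ∈ Ico h (k-1), (1 - t ^ (2 ^ j))) * (1 - t ^ (2 ^ (k-1)))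
      ≤ 1 - t ^ (2 ^ (k-1)) := by
    nlinarith [mul_nonneg (sub_nonneg.mpr hrest) hfac]
  exact mul_le_mul_of_nonneg_left h1 hS

lemma main_estimate {k h : ℕ} (hk : 1 ≤ k) (hh : h < k) {x : ℝ} (hx : 1 < x) :
    gFun k x - (1/2) * gFun h (x + ((2 ^ k : ℕ) : ℝ))
      ≤ (249/200) * gFun h x - (17/10) * gFun h (x + ((2 ^ (k-1) : ℕ) : ℝ)) := by
  set a : ℕ := 2 ^ (k - 1) with ha
  set B : ℕ := 2 ^ k with hB
  have hBa : B = a * 2 := by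
    rw [ha, hB, ← pow_succ]
    congr 1
    omega
  have ha1 : 1 ≤ a := Nat.one_le_two_pow
  have hB1 : 1 ≤ B := Nat.one_le_two_pow
  -- pointwise comparison of integrands
  have hI : ∫ t in (0:ℝ)..1, (t ^ (x-1) * S k t + (17/10) * (t ^ (x-1) * (t ^ a * S h t)))
      ≤ ∫ t in (0:ℝ)..1, ((1/2) * (t ^ (x-1) * (t ^ B * S h t))
          + (249/200) * (t ^ (x-1) * S h t)) := by
    apply intervalIntegral.integral_mono_on (by norm_num)
    · exact ((integrable_weight hx (cont_S k)).add
        ((integrable_weight hx ((continuous_pow a).mul (cont_S h))).const_mul _))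
    · exact (((integrable_weight hx ((continuous_pow B).mul (cont_S h))).const_mul _).add
        ((integrable_weight hx (cont_S h)).const_mul _))
    · intro t ht
      obtain ⟨ht0, ht1⟩ := ht
      have hrp : (0:ℝ) ≤ t ^ (x - 1) := Real.rpow_nonneg ht0 _
      have hSk := S_le_chop hh ht0 ht1
      have hSh := S_nonneg h ht0 ht1
      have hu0 : (0:ℝ) ≤ t ^ a := pow_nonneg ht0 a
      have hu1 : t ^ a ≤ 1 := pow_le_one₀ ht0 ht1
      have huB : t ^ B = (t ^ a) ^ 2 := by rw [hBa, pow_mul]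
      have inner : S k t + (17/10) * (t ^ a * S h t)
          ≤ (1/2) * (t ^ B * S h t) + (249/200) * S h t := by
        rw [huB]
        nlinarith [mul_nonneg hSh (sq_nonneg (t ^ a - 7/10)), hSk, hSh, hrp,
          mul_le_mul_of_nonneg_left hSk hrp]
      calc t ^ (x-1) * S k t + (17/10) * (t ^ (x-1) * (t ^ a * S h t))
          = t ^ (x-1) * (S k t + (17/10) * (t ^ a * S h t)) := by ring
        _ ≤ t ^ (x-1) * ((1/2) * (t ^ B * S h t) + (249/200) * S h t) :=
            mul_le_mul_of_nonneg_left inner hrp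
        _ = (1/2) * (t ^ (x-1) * (t ^ B * S h t)) + (249/200) * (t ^ (x-1) * S h t) := by ring
  -- identify the integrals
  have EL : ∫ t in (0:ℝ)..1, (t ^ (x-1) * S k t + (17/10) * (t ^ (x-1) * (t ^ a * S h t)))
      = gFun k x + (17/10) * gFun h (x + a) := by
    rw [intervalIntegral.integral_add (integrable_weight hx (cont_S k))
        ((integrable_weight hx (F := fun t => t ^ a * S h t) ((continuous_pow a).mul (cont_S h))).const_mul _),
      intervalIntegral.integral_const_mul, ← gFun_rep hx k, ← shift_rep hx a ha1 h]
  have ER : ∫ t in (0:ℝ)..1, ((1/2) * (t ^ (x-1) * (t ^ B * S h t))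
        + (249/200) * (t ^ (x-1) * S h t))
      = (1/2) * gFun h (x + B) + (249/200) * gFun h x := by
    rw [intervalIntegral.integral_add
        ((integrable_weight hx (F := fun t => t ^ B * S h t) ((continuous_pow B).mul (cont_S h))).const_mul _)
        ((integrable_weight hx (cont_S h)).const_mul _),
      intervalIntegral.integral_const_mul, intervalIntegral.integral_const_mul,
      ← gFun_rep hx h, ← shift_rep hx B hB1 h]
  rw [EL, ER] at hI
  linarith

/-! ### Conclusion -/

/-- for integers `k ≥ 1` and `0 ≤ h < k`, and every real
`x ≥ 2^{k+1}·k`, one has `g_k(x) < (1/2)·g_h(x + 2^k)`. -/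
theorem stmt_7 (k h : ℕ) (hk : 1 ≤ k) (hh : h < k) (x : ℝ)
    (hx : 2 ^ (k + 1) * (k : ℝ) ≤ x) :
    gFun k x < 1 / 2 * gFun h (x + 2 ^ k) := by
  set a : ℕ := 2 ^ (k - 1) with ha
  set A : ℝ := (a : ℝ) with hA
  have hA1 : (1:ℝ) ≤ A := by
    rw [hA]; exact_mod_cast Nat.one_le_two_pow
  have hA0 : (0:ℝ) ≤ A := by linarith
  have hk1 : (1:ℝ) ≤ (k:ℝ) := by exact_mod_cast hk
  have h4A : (2:ℝ) ^ (k + 1) = 4 * A := by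
    rw [hA, ha]
    push_cast
    rw [show (4:ℝ) = 2^2 by norm_num, ← pow_add]
    congr 1
    omega
  have hxbig : 4 * A * (k:ℝ) ≤ x := by rw [← h4A]; exact hx
  have hAk : (1:ℝ) ≤ A * k := by nlinarith
  have hx1 : (1:ℝ) < x := by nlinarith
  have gpos : 0 < gFun h x := gFun_pos hx1 h
  have ratio := ratio_lemma hx1 h a Nat.one_le_two_pow
  have hhk : (h:ℝ) ≤ (k:ℝ) - 1 := by
    have : (h:ℝ) + 1 ≤ (k:ℝ) := by exact_mod_cast hh
    linarith
  have hAh : A * (h:ℝ) ≤ A * ((k:ℝ) - 1) := mul_le_mul_of_nonneg_left hhk hA0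
  have numeric : (249/200) * (x + A) < (17/10) * (x - A * h) := by nlinarith
  have hxA : (0:ℝ) < x + A := by linarith
  -- conclude (249/200) g_h(x) < (17/10) g_h(x+A)
  have c1 : ((249/200) * (x + A)) * gFun h x < ((17/10) * (x - A * h)) * gFun h x :=
    mul_lt_mul_of_pos_right numeric gpos
  have c2 : (17/10) * ((x - A * h) * gFun h x) ≤ (17/10) * ((x + A) * gFun h (x + A)) :=
    mul_le_mul_of_nonneg_left ratio (by norm_num)
  have key2 : (x + A) * ((249/200) * gFun h x) < (x + A) * ((17/10) * gFun h (x + A)) := by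
    nlinarith [c1, c2]
  have final : (249/200) * gFun h x < (17/10) * gFun h (x + A) :=
    lt_of_mul_lt_mul_left key2 hxA.le
  have main := main_estimate hk hh hx1
  have hcast : ((2 ^ k : ℕ) : ℝ) = (2:ℝ) ^ k := by push_cast; ring
  rw [hcast] at main
  rw [← hA] at main
  linarith
end

section
/- Let τ ∈ ℝ, let k ≥ 0 be an integer, and let n ≥ 2^{k+1}·(k+1) be an integer such that σ_{n−1}(τ) ≤ τ < σ_{n−1}(τ) + g_k(n). Then s_{n+r}(τ) = ε_r for all integers r with 0 ≤ r < 2^{k+1}, and at least one of the following holds: (i) σ_{n−1}(τ) ≤ τ < σ_{n−1}(τ) + g_{k+1}(n); (ii) σ_{n−1+2^k}(τ) − g_k(n+2^k) ≤ τ < σ_{n−1+2^k}(τ). Symmetrically, if instead σ_{n−1}(τ) − g_k(n) ≤ τ < σ_{n−1}(τ), then s_{n+r}(τ) = −ε_r for all 0 ≤ r < 2^{k+1}, and at least one of the following holds: (i') σ_{n−1}(τ) − g_{k+1}(n) ≤ τ < σ_{n−1}(τ); (ii') σ_{n−1+2^k}(τ) ≤ τ < σ_{n−1+2^k}(τ)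 + g_k(n+2^k). -/
/-- Greedy partial sums: `gSigma τ n = σ_n(τ)`. -/
noncomputable def gSigma (τ : ℝ) : ℕ → ℝ
  | 0 => 0
  | n + 1 => gSigma τ n + (if gSigma τ n ≤ τ then (1 : ℝ) else -1) / (n + 1)

/-- Greedy signs: for `n ≥ 1`, `gSign τ n = s_n(τ)`. -/
noncomputable def gSign (τ : ℝ) (n : ℕ) : ℝ :=
  if gSigma τ (n - 1) ≤ τ then 1 else -1

open Finset intervalIntegral


lemma tm0 : tmSign 0 = 1 := by simp [tmSign]
lemma tm_two_mul (m : ℕ) : tmSign (2 * m) = tmSign m := by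
  rcases Nat.eq_zero_or_pos m with h | h
  · simp [h]
  · rw [tmSign, Nat.digits_def' (by norm_num) (by omega)]
    simp [Nat.mul_div_cancel_left, tmSign, Nat.mul_mod_right]
lemma tm_two_mul_add_one (m : ℕ) : tmSign (2 * m + 1) = - tmSign m := by
  rw [tmSign, Nat.digits_def' (by norm_num) (by omega)]
  have h1 : (2 * m + 1) % 2 = 1 := by omega
  have h2 : (2 * m + 1) / 2 = m := by omega
  rw [h1, h2]
  simp [tmSign, pow_succ, pow_add]

lemma tm_flip : ∀ k ℓ : ℕ, ℓ < 2 ^ k → tmSign (2 ^ k + ℓ) = - tmSign ℓ := by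
  intro k
  induction k with
  | zero => intro ℓ hℓ; interval_cases ℓ
            · show tmSign 1 = - tmSign 0
              rw [tmSign, Nat.digits_def' (by norm_num) (by norm_num)]
              simp [tmSign]
  | succ k ih =>
      intro ℓ hℓ
      have hq : ℓ / 2 < 2 ^ k := by omega
      rcases Nat.even_or_odd ℓ with ⟨q, hqe⟩ | ⟨q, hqe⟩
      · have h1 : 2 ^ (k+1) + ℓ = 2 * (2 ^ k + q) := by subst hqe; rw [pow_succ]; ring
        have h2 : ℓ = 2 * q := by omega
        rw [h1, tm_two_mul, h2, tm_two_mul, ih q (by omega)]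
      · have h1 : 2 ^ (k+1) + ℓ = 2 * (2 ^ k + q) + 1 := by subst hqe; rw [pow_succ]; ring
        have h2 : ℓ = 2 * q + 1 := by omega
        rw [h1, tm_two_mul_add_one, h2, tm_two_mul_add_one, ih q (by omega), neg_neg]

noncomputable def Pfun (k : ℕ) (t : ℝ) : ℝ := ∏ j ∈ range k, (1 - t ^ (2 ^ j))
noncomputable def Pder (k : ℕ) (t : ℝ) : ℝ :=
  ∑ j ∈ range k, (∏ i ∈ (range k).erase j, (1 - t ^ (2 ^ i))) * (-(((2:ℕ) ^ j : ℕ) * t ^ (2 ^ j - 1)))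

lemma Pfun_continuous (k : ℕ) : Continuous (Pfun k) :=
  continuous_finset_prod _ fun _ _ => continuous_const.sub (continuous_pow _)

lemma Pder_continuous (k : ℕ) : Continuous (Pder k) :=
  continuous_finset_sum _ fun _ _ =>
    (continuous_finset_prod _ fun _ _ => continuous_const.sub (continuous_pow _)).mul
      ((continuous_const.mul (continuous_pow _)).neg)

lemma Pfun_hasDeriv (k : ℕ) (t : ℝ) : HasDerivAt (Pfun k) (Pder k t) t := by
  have h : ∀ j ∈ range k, HasDerivAt (fun x : ℝ => 1 - x ^ (2 ^ j))
      (-((((2:ℕ) ^ j : ℕ) : ℝ) * t ^ (2 ^ j - 1))) t :=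
    fun j _ => (hasDerivAt_pow (2 ^ j) t).const_sub 1
  have := HasDerivAt.fun_finsetProd h
  show HasDerivAt (fun x => Pfun k x) (Pder k t) t
  simpa [Pfun, Pder, smul_eq_mul] using this

lemma scalar_ineq {t : ℝ} (h0 : 0 ≤ t) (h1 : t ≤ 1) {m : ℕ} (hm : 1 ≤ m) :
    (1 - t) * ((m : ℝ) * t ^ (m - 1)) ≤ 1 - t ^ m := by
  have hg : 1 - t ^ m = (1 - t) * ∑ i ∈ range m, t ^ i := by
    linear_combination geom_sum_mul t m
  have hS : (m : ℝ) * t ^ (m - 1) ≤ ∑ i ∈ range m, t ^ i := by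
    calc (m : ℝ) * t ^ (m - 1) = ∑ _i ∈ range m, t ^ (m - 1) := by
          rw [Finset.sum_const, card_range, nsmul_eq_mul]
      _ ≤ ∑ i ∈ range m, t ^ i :=
          Finset.sum_le_sum fun i hi => pow_le_pow_of_le_one h0 h1 (by
            have := mem_range.mp hi; omega)
  rw [hg]
  exact mul_le_mul_of_nonneg_left hS (by linarith)

lemma key_pointwise (k : ℕ) {t : ℝ} (h0 : 0 ≤ t) (h1 : t ≤ 1) :
    0 ≤ (1 - t) * Pder k t + (k : ℝ) * Pfun k t := by
  have hP : (k : ℝ) * Pfun k t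
      = ∑ j ∈ range k, (∏ i ∈ (range k).erase j, (1 - t ^ (2 ^ i))) * (1 - t ^ (2 ^ j)) := by
    rw [Finset.sum_congr rfl (fun j hj => Finset.prod_erase_mul _ _ hj)]
    rw [Finset.sum_const, card_range, nsmul_eq_mul, Pfun]
  rw [Pder, Finset.mul_sum, hP, ← Finset.sum_add_distrib]
  refine Finset.sum_nonneg fun j hj => ?_
  have hE : (0:ℝ) ≤ ∏ i ∈ (range k).erase j, (1 - t ^ (2 ^ i)) :=
    Finset.prod_nonneg fun i _ => by
      have : t ^ (2 ^ i) ≤ 1 := pow_le_one₀ h0 h1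
      linarith
  have hkey := scalar_ineq h0 h1 (m := 2 ^ j) (Nat.one_le_two_pow)
  have heq : (1 - t) * ((∏ i ∈ (range k).erase j, (1 - t ^ (2 ^ i))) * (-(((2:ℕ) ^ j : ℕ) * t ^ (2 ^ j - 1))))
        + (∏ i ∈ (range k).erase j, (1 - t ^ (2 ^ i))) * (1 - t ^ (2 ^ j))
      = (∏ i ∈ (range k).erase j, (1 - t ^ (2 ^ i)))
          * ((1 - t ^ (2 ^ j)) - (1 - t) * (((2:ℕ) ^ j : ℕ) * t ^ (2 ^ j - 1))) := by
    ring
  rw [heq]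
  exact mul_nonneg hE (by linarith)

lemma Pfun_expand (k : ℕ) (t : ℝ) :
    Pfun k t = ∑ ℓ ∈ range (2 ^ k), tmSign ℓ * t ^ ℓ := by
  induction k with
  | zero => simp [Pfun, tm0]
  | succ k ih =>
      have hsplit : Pfun (k+1) t = Pfun k t * (1 - t ^ (2 ^ k)) := by
        rw [Pfun, Pfun, prod_range_succ]
      rw [hsplit, ih]
      have h2 : 2 ^ (k+1) = 2 ^ k + 2 ^ k := by rw [pow_succ]; ring
      rw [h2, Finset.sum_range_add]
      have hneg : ∑ i ∈ range (2 ^ k), tmSign (2 ^ k + i) * t ^ (2 ^ k + i)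
          = -∑ i ∈ range (2 ^ k), tmSign i * t ^ i * t ^ (2 ^ k) := by
        rw [← Finset.sum_neg_distrib]
        refine Finset.sum_congr rfl fun i hi => ?_
        rw [tm_flip k i (mem_range.mp hi), pow_add]; ring
      rw [hneg, mul_sub, mul_one, Finset.sum_mul]
      ring

lemma Pfun_nonneg (k : ℕ) {t : ℝ} (h0 : 0 ≤ t) (h1 : t ≤ 1) : 0 ≤ Pfun k t :=
  Finset.prod_nonneg fun j _ => by
    have : t ^ (2 ^ j) ≤ 1 := pow_le_one₀ h0 h1
    linarith

lemma Pfun_pos (k : ℕ) {t : ℝ} (h0 : 0 < t) (h1 : t < 1) : 0 < Pfun k t :=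
  Finset.prod_pos fun j _ => by
    have : t ^ (2 ^ j) < 1 := pow_lt_one₀ h0.le h1 (by positivity)
    linarith

lemma integral_rep (k N : ℕ) (hN : 1 ≤ N) :
    gFun k (N : ℝ) = ∫ t in (0:ℝ)..1, t ^ (N - 1) * Pfun k t := by
  have hcont : ∀ ℓ : ℕ, IntervalIntegrable (fun t : ℝ => tmSign ℓ * t ^ (N - 1 + ℓ)) MeasureTheory.volume 0 1 :=
    fun ℓ => ((continuous_const.mul (continuous_pow _)).intervalIntegrable 0 1)
  have hcong : (∫ t in (0:ℝ)..1, t ^ (N - 1) * Pfun k t)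
      = ∫ t in (0:ℝ)..1, ∑ ℓ ∈ range (2 ^ k), tmSign ℓ * t ^ (N - 1 + ℓ) := by
    refine intervalIntegral.integral_congr fun t _ => ?_
    rw [Pfun_expand, Finset.mul_sum]
    refine Finset.sum_congr rfl fun ℓ _ => ?_
    rw [pow_add]; ring
  rw [hcong, intervalIntegral.integral_finset_sum (fun ℓ _ => hcont ℓ)]
  unfold gFun
  refine Finset.sum_congr rfl fun ℓ _ => ?_
  rw [intervalIntegral.integral_const_mul, integral_pow, one_pow, zero_pow (by omega)]
  have hc : ((N - 1 + ℓ : ℕ) : ℝ) + 1 = (N : ℝ) + ℓ := by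
    push_cast [Nat.cast_sub hN]; ring
  rw [hc]; ring

lemma gFun_pos_s10 (k N : ℕ) (hN : 1 ≤ N) : 0 < gFun k (N : ℝ) := by
  rw [integral_rep k N hN]
  refine intervalIntegral.intervalIntegral_pos_of_pos_on
    (((continuous_pow _).mul (Pfun_continuous k)).intervalIntegrable 0 1) (fun t ht => ?_) one_pos
  exact mul_pos (pow_pos ht.1 _) (Pfun_pos k ht.1 ht.2)

lemma ftc (k M : ℕ) (hM : 1 ≤ M) :
    (∫ t in (0:ℝ)..1, ((M : ℝ) * (t ^ (M - 1) * Pfun k t) + t ^ M * Pder k t)) = Pfun k 1 := by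
  have hderiv : ∀ t ∈ Set.uIcc (0:ℝ) 1, HasDerivAt (fun x : ℝ => x ^ M * Pfun k x)
      ((M : ℝ) * (t ^ (M - 1) * Pfun k t) + t ^ M * Pder k t) t :=
    fun t _ => by simpa [mul_assoc, Pi.mul_def] using (hasDerivAt_pow M t).mul (Pfun_hasDeriv k t)
  have hint : IntervalIntegrable (fun t : ℝ => (M : ℝ) * (t ^ (M - 1) * Pfun k t) + t ^ M * Pder k t)
      MeasureTheory.volume 0 1 :=
    ((continuous_const.mul ((continuous_pow _).mul (Pfun_continuous k))).add
      ((continuous_pow _).mul (Pder_continuous k))).intervalIntegrable 0 1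
  rw [intervalIntegral.integral_eq_sub_of_hasDerivAt hderiv hint]
  rw [one_pow, zero_pow (by omega)]
  ring

lemma shift_ineq (k N : ℕ) (hN : 1 ≤ N) :
    (N : ℝ) * gFun k (N : ℝ) ≤ ((N : ℝ) + k + 1) * gFun k ((N + 1 : ℕ) : ℝ) := by
  have hiPf : ∀ m : ℕ, IntervalIntegrable (fun t : ℝ => t ^ m * Pfun k t) MeasureTheory.volume 0 1 :=
    fun m => ((continuous_pow _).mul (Pfun_continuous k)).intervalIntegrable 0 1
  have hiPd : ∀ m : ℕ, IntervalIntegrable (fun t : ℝ => t ^ m * Pder k t) MeasureTheory.volume 0 1 :=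
    fun m => ((continuous_pow _).mul (Pder_continuous k)).intervalIntegrable 0 1
  have e1 : (N : ℝ) * (∫ t in (0:ℝ)..1, t ^ (N - 1) * Pfun k t)
      + (∫ t in (0:ℝ)..1, t ^ N * Pder k t) = Pfun k 1 := by
    rw [← intervalIntegral.integral_const_mul,
      ← intervalIntegral.integral_add ((hiPf (N - 1)).const_mul _) (hiPd N)]
    exact ftc k N hN
  have e2 : ((N : ℝ) + 1) * (∫ t in (0:ℝ)..1, t ^ N * Pfun k t)
      + (∫ t in (0:ℝ)..1, t ^ (N + 1) * Pder k t) = Pfun k 1 := by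
    have h := ftc k (N + 1) (by omega)
    simp only [Nat.add_sub_cancel] at h
    push_cast at h
    rw [← intervalIntegral.integral_const_mul,
      ← intervalIntegral.integral_add ((hiPf N).const_mul _) (hiPd (N + 1))]
    exact h
  have hnonneg : 0 ≤ (k : ℝ) * (∫ t in (0:ℝ)..1, t ^ N * Pfun k t)
      + ((∫ t in (0:ℝ)..1, t ^ N * Pder k t) - (∫ t in (0:ℝ)..1, t ^ (N + 1) * Pder k t)) := by
    rw [← intervalIntegral.integral_const_mul, ← intervalIntegral.integral_sub (hiPd N) (hiPd (N + 1)),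
      ← intervalIntegral.integral_add ((hiPf N).const_mul _) ((hiPd N).sub (hiPd (N + 1)))]
    refine intervalIntegral.integral_nonneg zero_le_one fun t ht => ?_
    have h := key_pointwise k ht.1 ht.2
    have heq : (k : ℝ) * (t ^ N * Pfun k t) + (t ^ N * Pder k t - t ^ (N + 1) * Pder k t)
        = t ^ N * ((1 - t) * Pder k t + (k : ℝ) * Pfun k t) := by
      rw [pow_succ]; ring
    rw [heq]
    exact mul_nonneg (pow_nonneg ht.1 _) h
  rw [integral_rep k N hN, integral_rep k (N + 1) (by omega)]
  simp only [Nat.add_sub_cancel]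
  push_cast
  linarith

lemma ratio_lemma_s10 (k N : ℕ) (hN : 1 ≤ N) : ∀ m : ℕ,
    gFun k (N : ℝ) * (1 - ((k:ℝ)+1)/((N:ℝ)+k+1)) ^ m ≤ gFun k ((N + m : ℕ) : ℝ) := by
  have hden : (0:ℝ) < (N:ℝ)+k+1 := by positivity
  have hcN : (1 - ((k:ℝ)+1)/((N:ℝ)+k+1)) = (N:ℝ)/((N:ℝ)+k+1) := by field_simp; ring
  have hc0 : 0 ≤ 1 - ((k:ℝ)+1)/((N:ℝ)+k+1) := by
    rw [hcN]; positivity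
  intro m
  induction m with
  | zero => simp
  | succ m ih =>
    have hgpos : 0 < gFun k ((N+m : ℕ) : ℝ) := gFun_pos_s10 _ _ (by omega)
    have hden2 : (0:ℝ) < (N:ℝ)+m+k+1 := by positivity
    have hcle : (1 - ((k:ℝ)+1)/((N:ℝ)+k+1)) ≤ ((N:ℝ)+m)/((N:ℝ)+m+k+1) := by
      rw [hcN, div_le_div_iff₀ hden hden2]
      nlinarith [Nat.cast_nonneg (α := ℝ) m, Nat.cast_nonneg (α := ℝ) k, Nat.cast_nonneg (α := ℝ) N]
    have hD := shift_ineq k (N+m) (by omega)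
    push_cast at hD
    have hstep : (1 - ((k:ℝ)+1)/((N:ℝ)+k+1)) * gFun k ((N+m : ℕ) : ℝ) ≤ gFun k ((N+(m+1) : ℕ) : ℝ) := by
      have h2 : ((N:ℝ)+m)/((N:ℝ)+m+k+1) * gFun k ((N+m : ℕ) : ℝ) ≤ gFun k ((N+(m+1) : ℕ) : ℝ) := by
        rw [div_mul_eq_mul_div, div_le_iff₀ hden2]
        have hcast1 : ((N + m : ℕ) : ℝ) = (N:ℝ) + m := by push_cast; ring
        have hcast2 : ((N + (m+1) : ℕ) : ℝ) = (N:ℝ) + m + 1 := by push_cast; ring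
        rw [hcast1, hcast2]
        nlinarith [hD]
      calc (1 - ((k:ℝ)+1)/((N:ℝ)+k+1)) * gFun k ((N+m : ℕ) : ℝ)
          ≤ ((N:ℝ)+m)/((N:ℝ)+m+k+1) * gFun k ((N+m : ℕ) : ℝ) :=
            mul_le_mul_of_nonneg_right hcle hgpos.le
        _ ≤ gFun k ((N+(m+1) : ℕ) : ℝ) := h2
    calc gFun k (N : ℝ) * (1 - ((k:ℝ)+1)/((N:ℝ)+k+1)) ^ (m+1)
        = (1 - ((k:ℝ)+1)/((N:ℝ)+k+1)) * (gFun k (N : ℝ) * (1 - ((k:ℝ)+1)/((N:ℝ)+k+1)) ^ m) := by ring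
      _ ≤ (1 - ((k:ℝ)+1)/((N:ℝ)+k+1)) * gFun k ((N+m : ℕ) : ℝ) :=
          mul_le_mul_of_nonneg_left ih hc0
      _ ≤ gFun k ((N+(m+1) : ℕ) : ℝ) := hstep

lemma gFun_step_ineq (k N : ℕ) (hN : 2 ^ (k+2) * (k+2) ≤ N) :
    gFun k (N : ℝ) ≤ gFun k ((N + 2^k : ℕ) : ℝ) + gFun k ((N + 2^(k+1) : ℕ) : ℝ) := by
  have hN1 : 1 ≤ N := le_trans (Nat.one_le_iff_ne_zero.mpr (by positivity)) hN
  set c : ℝ := 1 - ((k:ℝ)+1)/((N:ℝ)+k+1) with hc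
  have hden : (0:ℝ) < (N:ℝ)+k+1 := by positivity
  have h1 := ratio_lemma_s10 k N hN1 (2^k)
  have h2 := ratio_lemma_s10 k N hN1 (2^(k+1))
  have hx2 : ((k:ℝ)+1)/((N:ℝ)+k+1) ≤ 1 := by
    rw [div_le_one hden]; linarith [Nat.cast_nonneg (α := ℝ) N]
  have hNval : (2:ℝ)^(k+2) * ((k:ℝ)+2) ≤ (N:ℝ) := by exact_mod_cast hN
  have hα : 3/4 ≤ c ^ (2^k) := by
    have hx1 : ((k:ℝ)+1)/((N:ℝ)+k+1) ≤ 1/2^(k+2) := by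
      rw [div_le_div_iff₀ hden (by positivity)]
      nlinarith [hNval, Nat.cast_nonneg (α := ℝ) k, (pow_pos (by norm_num : (0:ℝ) < 2) (k+2)).le]
    have hbern : 1 + (2^k : ℕ) * (-(((k:ℝ)+1)/((N:ℝ)+k+1))) ≤ (1 + (-(((k:ℝ)+1)/((N:ℝ)+k+1)))) ^ (2^k) :=
      one_add_mul_le_pow (by linarith) (2^k)
    have hcast : ((2^k : ℕ) : ℝ) = (2:ℝ)^k := by push_cast; ring
    rw [hcast] at hbern
    have hquarter : (2:ℝ)^k * (((k:ℝ)+1)/((N:ℝ)+k+1)) ≤ 1/4 := by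
      calc (2:ℝ)^k * (((k:ℝ)+1)/((N:ℝ)+k+1)) ≤ (2:ℝ)^k * (1/2^(k+2)) :=
            mul_le_mul_of_nonneg_left hx1 (by positivity)
        _ = 1/4 := by rw [pow_add]; field_simp; ring
    have hceq : c = 1 + (-(((k:ℝ)+1)/((N:ℝ)+k+1))) := by rw [hc]; ring
    rw [hceq]
    nlinarith [hbern, hquarter]
  have hα2 : (9:ℝ)/16 ≤ (c ^ (2^k))^2 := by nlinarith [hα]
  have hc1 : c ^ (2^(k+1)) = (c ^ (2^k))^2 := by rw [← pow_mul, pow_succ]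
  have hgN : 0 < gFun k (N : ℝ) := gFun_pos_s10 k N hN1
  rw [hc1] at h2
  have hm1 := mul_le_mul_of_nonneg_left hα hgN.le
  have hm2 := mul_le_mul_of_nonneg_left hα2 hgN.le
  linarith [h1, h2, hm1, hm2]

section Comb

lemma tm1 : tmSign 1 = -1 := by
  have := tm_flip 0 0 (by norm_num)
  simpa [tm0] using this

lemma gFun_zero (x : ℝ) : gFun 0 x = 1 / x := by
  simp [gFun, tm0]

lemma gFun_succ (k : ℕ) (x : ℝ) : gFun (k+1) x = gFun k x - gFun k (x + 2^k) := by
  unfold gFun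
  rw [show 2^(k+1) = 2^k + 2^k from by rw [pow_succ]; ring, Finset.sum_range_add]
  have h2 : ∑ i ∈ range (2^k), tmSign (2^k + i) / (x + ((2^k + i : ℕ) : ℝ))
      = -∑ i ∈ range (2^k), tmSign i / ((x + 2^k) + (i : ℝ)) := by
    rw [← Finset.sum_neg_distrib]
    refine Finset.sum_congr rfl fun i hi => ?_
    rw [tm_flip k i (Finset.mem_range.mp hi)]
    push_cast
    ring
  rw [h2]
  ring

lemma gSigma_succ (τ : ℝ) (m : ℕ) :
    gSigma τ (m+1) = gSigma τ m + gSign τ (m+1) / ((m : ℝ) + 1) := by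
  rw [gSigma, gSign]
  simp

lemma gSigma_block (τ : ℝ) (n : ℕ) (hn : 1 ≤ n) (a : ℕ → ℝ) :
    ∀ j : ℕ, (∀ r, r < j → gSign τ (n + r) = a r) →
    gSigma τ (n - 1 + j) = gSigma τ (n - 1) + ∑ r ∈ range j, a r / ((n : ℝ) + r) := by
  intro j
  induction j with
  | zero => simp
  | succ j ih =>
    intro h
    have hj := ih (fun r hr => h r (by omega))
    have hidx : n - 1 + (j+1) = (n - 1 + j) + 1 := by omega
    rw [hidx, gSigma_succ, hj, Finset.sum_range_succ]
    rw [show (n - 1 + j) + 1 = n + j from by omega]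
    rw [h j (by omega)]
    have hcast : ((n - 1 + j : ℕ) : ℝ) + 1 = (n : ℝ) + j := by
      push_cast [Nat.cast_sub hn]
      ring
    rw [hcast]
    ring

end Comb
theorem main_ind : ∀ k : ℕ, ∀ τ : ℝ, ∀ n : ℕ, 2 ^ (k + 1) * (k + 1) ≤ n →
    (gSigma τ (n - 1) ≤ τ ∧ τ < gSigma τ (n - 1) + gFun k (n : ℝ) →
      (∀ r : ℕ, r < 2 ^ (k + 1) → gSign τ (n + r) = tmSign r) ∧
      ((gSigma τ (n - 1) ≤ τ ∧ τ < gSigma τ (n - 1) + gFun (k + 1) (n : ℝ)) ∨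
        (gSigma τ (n - 1 + 2 ^ k) - gFun k ((n : ℝ) + 2 ^ k) ≤ τ ∧
          τ < gSigma τ (n - 1 + 2 ^ k)))) ∧
    (gSigma τ (n - 1) - gFun k (n : ℝ) ≤ τ ∧ τ < gSigma τ (n - 1) →
      (∀ r : ℕ, r < 2 ^ (k + 1) → gSign τ (n + r) = - tmSign r) ∧
      ((gSigma τ (n - 1) - gFun (k + 1) (n : ℝ) ≤ τ ∧ τ < gSigma τ (n - 1)) ∨
        (gSigma τ (n - 1 + 2 ^ k) ≤ τ ∧
          τ < gSigma τ (n - 1 + 2 ^ k) + gFun k ((n : ℝ) + 2 ^ k)))) := by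
  intro k
  induction k with
  | zero =>
    intro τ n hn
    have hn2 : 2 ≤ n := by simpa using hn
    have hnR : (2 : ℝ) ≤ (n : ℝ) := by exact_mod_cast hn2
    have hg0 : gFun 0 (n : ℝ) = 1 / (n : ℝ) := gFun_zero _
    have hg0' : gFun 0 ((n : ℝ) + 2 ^ 0) = 1 / ((n : ℝ) + 1) := by
      rw [pow_zero, gFun_zero]
    have hg1 : gFun 1 (n : ℝ) = 1 / (n : ℝ) - 1 / ((n : ℝ) + 1) := by
      rw [show (1 : ℕ) = 0 + 1 from rfl, gFun_succ, pow_zero, gFun_zero, gFun_zero]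
    have hσs := gSigma_succ τ (n - 1)
    rw [show n - 1 + 1 = n from by omega] at hσs
    have hcast : ((n - 1 : ℕ) : ℝ) + 1 = (n : ℝ) := by
      push_cast [Nat.cast_sub (by omega : 1 ≤ n)]; ring
    rw [hcast] at hσs
    have hidx : n - 1 + 2 ^ 0 = n := by omega
    constructor
    · rintro ⟨h1, h2⟩
      rw [hg0] at h2
      have hsn : gSign τ n = 1 := if_pos h1
      have hσn : gSigma τ n = gSigma τ (n - 1) + 1 / (n : ℝ) := by
        rw [hσs, hsn]
      have hsn1 : gSign τ (n + 1) = -1 := by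
        apply if_neg
        rw [show n + 1 - 1 = n from by omega, hσn]
        push_neg
        linarith
      constructor
      · intro r hr
        interval_cases r
        · rw [tm0]; simpa using hsn
        · rw [hsn1, tm1]
      · by_cases hc : τ < gSigma τ (n - 1) + gFun 1 (n : ℝ)
        · exact Or.inl ⟨h1, hc⟩
        · refine Or.inr ?_
          rw [hidx, hσn, hg0']
          rw [hg1] at hc
          push_neg at hc
          exact ⟨by linarith, by linarith⟩
    · rintro ⟨h1, h2⟩
      rw [hg0] at h1
      have hsn : gSign τ n = -1 := if_neg (not_le.mpr h2)
      have hσn : gSigma τ n = gSigma τ (n - 1) - 1 / (n : ℝ) := by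
        rw [hσs, hsn]; ring
      have hsn1 : gSign τ (n + 1) = 1 := by
        apply if_pos
        rw [show n + 1 - 1 = n from by omega, hσn]
        linarith
      constructor
      · intro r hr
        interval_cases r
        · rw [tm0]; simpa using hsn
        · rw [hsn1, tm1]; norm_num
      · by_cases hc : gSigma τ (n - 1) - gFun 1 (n : ℝ) ≤ τ
        · exact Or.inl ⟨hc, h2⟩
        · refine Or.inr ?_
          rw [hidx, hσn, hg0']
          rw [hg1] at hc
          push_neg at hc
          exact ⟨by linarith, by linarith⟩
  | succ k ih =>
    intro τ n hn
    have hn1 : 1 ≤ n := by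
      have : 0 < 2 ^ (k + 1 + 1) * (k + 1 + 1) := by positivity
      omega
    have hnk : 2 ^ (k + 1) * (k + 1) ≤ n :=
      le_trans (Nat.mul_le_mul (Nat.pow_le_pow_right (by norm_num) (by omega)) (by omega)) hn
    set n' := n + 2 ^ (k + 1) with hn'def
    have hn'k : 2 ^ (k + 1) * (k + 1) ≤ n' := le_trans hnk (Nat.le_add_right _ _)
    have hcn' : ((n' : ℕ) : ℝ) = (n : ℝ) + 2 ^ (k + 1) := by
      rw [hn'def]; push_cast; ring
    have hrec : gFun (k + 1) (n : ℝ) = gFun k (n : ℝ) - gFun k ((n : ℝ) + 2 ^ k) := gFun_succ k _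
    have hposk : 0 < gFun k ((n : ℝ) + 2 ^ k) := by
      have h := gFun_pos_s10 k (n + 2 ^ k) (by omega)
      rwa [show ((n + 2 ^ k : ℕ) : ℝ) = (n : ℝ) + 2 ^ k from by push_cast; ring] at h
    have hstep : gFun (k + 1) (n : ℝ) ≤ gFun k ((n' : ℕ) : ℝ) := by
      have h := gFun_step_ineq k n hn
      rw [show ((n + 2 ^ k : ℕ) : ℝ) = (n : ℝ) + 2 ^ k from by push_cast; ring,
        show ((n + 2 ^ (k + 1) : ℕ) : ℝ) = (n : ℝ) + 2 ^ (k + 1) from by push_cast; ring] at h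
      rw [hrec, hcn']
      linarith
    have hp2 : 0 < 2 ^ (k + 1) := pow_pos (by norm_num) _
    have hidx : n' - 1 = n - 1 + 2 ^ (k + 1) := by omega
    have e1 : gFun (k + 1 + 1) (n : ℝ)
        = gFun (k + 1) (n : ℝ) - gFun (k + 1) ((n : ℝ) + 2 ^ (k + 1)) := gFun_succ (k + 1) _
    have e2 : gFun (k + 1) ((n : ℝ) + 2 ^ (k + 1))
        = gFun k ((n : ℝ) + 2 ^ (k + 1)) - gFun k ((n : ℝ) + 2 ^ (k + 1) + 2 ^ k) := gFun_succ k _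
    have hcn'2 : ((n' : ℕ) : ℝ) + 2 ^ k = (n : ℝ) + 2 ^ (k + 1) + 2 ^ k := by rw [hcn']
    constructor
    · rintro ⟨h1, h2⟩
      have h2k : τ < gSigma τ (n - 1) + gFun k (n : ℝ) := by
        rw [hrec] at h2; linarith
      obtain ⟨S1, -⟩ := (ih τ n hnk).1 ⟨h1, h2k⟩
      have hblock := gSigma_block τ n hn1 tmSign (2 ^ (k + 1)) S1
      have hσ' : gSigma τ (n' - 1) = gSigma τ (n - 1) + gFun (k + 1) (n : ℝ) := by
        rw [hidx, hblock]; rfl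
      have hm1 : gSigma τ (n' - 1) - gFun k ((n' : ℕ) : ℝ) ≤ τ := by
        rw [hσ']; linarith
      have hm2 : τ < gSigma τ (n' - 1) := by rw [hσ']; linarith
      obtain ⟨S2, D2⟩ := (ih τ n' hn'k).2 ⟨hm1, hm2⟩
      refine ⟨?_, ?_⟩
      · intro r hr
        by_cases hcase : r < 2 ^ (k + 1)
        · exact S1 r hcase
        · have hpow2 : 2 ^ (k + 1 + 1) = 2 ^ (k + 1) + 2 ^ (k + 1) := by rw [pow_succ]; ring
          have hr' : r - 2 ^ (k + 1) < 2 ^ (k + 1) := by omega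
          have hS := S2 (r - 2 ^ (k + 1)) hr'
          rw [show n' + (r - 2 ^ (k + 1)) = n + r from by omega] at hS
          rw [hS]
          conv_rhs => rw [show r = 2 ^ (k + 1) + (r - 2 ^ (k + 1)) from by omega]
          rw [tm_flip (k + 1) _ hr']
      · rcases D2 with ⟨d1, d2⟩ | ⟨d1, d2⟩
        · right
          rw [hidx, hcn'] at d1
          rw [hidx] at d2
          exact ⟨d1, d2⟩
        · left
          refine ⟨h1, ?_⟩
          have hblock2 := gSigma_block τ n' (by omega) (fun r => -tmSign r) (2 ^ k)
            (fun r hr => S2 r (lt_of_lt_of_le hr (Nat.pow_le_pow_right (by norm_num) (by omega))))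
          have hσ'' : gSigma τ (n' - 1 + 2 ^ k) = gSigma τ (n' - 1) - gFun k ((n' : ℕ) : ℝ) := by
            rw [hblock2, sub_eq_add_neg]
            congr 1
            rw [gFun, ← Finset.sum_neg_distrib]
            exact Finset.sum_congr rfl fun i _ => by simp [neg_div]
          rw [hσ'', hσ', hcn'2, hcn'] at d2
          linarith
    · rintro ⟨h1, h2⟩
      have h1k : gSigma τ (n - 1) - gFun k (n : ℝ) ≤ τ := by
        rw [hrec] at h1; linarith
      obtain ⟨S1, -⟩ := (ih τ n hnk).2 ⟨h1k, h2⟩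
      have hblock := gSigma_block τ n hn1 (fun r => -tmSign r) (2 ^ (k + 1)) S1
      have hσ' : gSigma τ (n' - 1) = gSigma τ (n - 1) - gFun (k + 1) (n : ℝ) := by
        rw [hidx, hblock, sub_eq_add_neg]
        congr 1
        rw [gFun, ← Finset.sum_neg_distrib]
        exact Finset.sum_congr rfl fun i _ => by simp [neg_div]
      have hm1 : gSigma τ (n' - 1) ≤ τ := by rw [hσ']; linarith
      have hm2 : τ < gSigma τ (n' - 1) + gFun k ((n' : ℕ) : ℝ) := by
        rw [hσ']; linarith
      obtain ⟨S2, D2⟩ := (ih τ n' hn'k).1 ⟨hm1, hm2⟩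
      refine ⟨?_, ?_⟩
      · intro r hr
        by_cases hcase : r < 2 ^ (k + 1)
        · exact S1 r hcase
        · have hpow2 : 2 ^ (k + 1 + 1) = 2 ^ (k + 1) + 2 ^ (k + 1) := by rw [pow_succ]; ring
          have hr' : r - 2 ^ (k + 1) < 2 ^ (k + 1) := by omega
          have hS := S2 (r - 2 ^ (k + 1)) hr'
          rw [show n' + (r - 2 ^ (k + 1)) = n + r from by omega] at hS
          rw [hS]
          conv_rhs => rw [show r = 2 ^ (k + 1) + (r - 2 ^ (k + 1)) from by omega]
          rw [tm_flip (k + 1) _ hr', neg_neg]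
      · rcases D2 with ⟨d1, d2⟩ | ⟨d1, d2⟩
        · right
          rw [hidx] at d1
          rw [hidx, hcn'] at d2
          exact ⟨d1, d2⟩
        · left
          refine ⟨?_, h2⟩
          have hblock2 := gSigma_block τ n' (by omega) tmSign (2 ^ k)
            (fun r hr => S2 r (lt_of_lt_of_le hr (Nat.pow_le_pow_right (by norm_num) (by omega))))
          have hσ'' : gSigma τ (n' - 1 + 2 ^ k) = gSigma τ (n' - 1) + gFun k ((n' : ℕ) : ℝ) := by
            rw [hblock2]; rfl
          rw [hσ'', hσ', hcn'2, hcn'] at d1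
          linarith

/-- Lemma 13 of the paper: the key block-propagation dichotomy for the
greedy algorithm, for `n ≥ 2^{k+1}(k+1)`. -/
theorem stmt_10 (τ : ℝ) (k n : ℕ) (hn : 2 ^ (k + 1) * (k + 1) ≤ n) :
    (gSigma τ (n - 1) ≤ τ ∧ τ < gSigma τ (n - 1) + gFun k (n : ℝ) →
      (∀ r : ℕ, r < 2 ^ (k + 1) → gSign τ (n + r) = tmSign r) ∧
      ((gSigma τ (n - 1) ≤ τ ∧ τ < gSigma τ (n - 1) + gFun (k + 1) (n : ℝ)) ∨
        (gSigma τ (n - 1 + 2 ^ k) - gFun k ((n : ℝ) + 2 ^ k) ≤ τ ∧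
          τ < gSigma τ (n - 1 + 2 ^ k)))) ∧
    (gSigma τ (n - 1) - gFun k (n : ℝ) ≤ τ ∧ τ < gSigma τ (n - 1) →
      (∀ r : ℕ, r < 2 ^ (k + 1) → gSign τ (n + r) = - tmSign r) ∧
      ((gSigma τ (n - 1) - gFun (k + 1) (n : ℝ) ≤ τ ∧ τ < gSigma τ (n - 1)) ∨
        (gSigma τ (n - 1 + 2 ^ k) ≤ τ ∧
          τ < gSigma τ (n - 1 + 2 ^ k) + gFun k ((n : ℝ) + 2 ^ k)))) := by
  exact main_ind k τ n hn
end
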